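/- Fix a ≥ 1 and suppose power series φ_1,...,φ_a, ψ ∈ ℚ[[t]] with zero constant terms satisfy ψ = φ_1 + ... + φ_a and φ_ℓ = ψ·(φ_1 + ... + φ_ℓ) + δ_{ℓ,1}·t for ℓ = 1,...,a. Then φ_ℓ = ψ²·(1-ψ)^{a-ℓ} + δ_{1,ℓ}·t for every ℓ = 1,...,a, and consequently t = ψ·(1-ψ)^a. -/

import Mathlib

open PowerSeries Finset

/-- Solving the genus-zero one-point system: if `ψ = φ_1 + ⋯ + φ_a` and
`φ_ℓ = ψ·(φ_1 + ⋯ + φ_ℓ) + δ_{ℓ,1}·t` for `ℓ = 1, …, a`, then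
`φ_ℓ = ψ²·(1-ψ)^{a-ℓ} + δ_{1,ℓ}·t` and consequently `t = ψ·(1-ψ)^a`. -/
theorem genus_zero_system (a : ℕ) (ha : 1 ≤ a)
    (φ : ℕ → PowerSeries ℚ) (ψ : PowerSeries ℚ)
    (hφ0 : ∀ ℓ ∈ Finset.Icc 1 a, PowerSeries.constantCoeff (φ ℓ) = 0)
    (hψ0 : PowerSeries.constantCoeff ψ = 0)
    (hψ : ψ = ∑ ℓ ∈ Finset.Icc 1 a, φ ℓ)
    (hsys : ∀ ℓ ∈ Finset.Icc 1 a,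
      φ ℓ = ψ * (∑ p ∈ Finset.Icc 1 ℓ, φ p) +
        (if ℓ = 1 then (PowerSeries.X : PowerSeries ℚ) else 0)) :
    (∀ ℓ ∈ Finset.Icc 1 a,
      φ ℓ = ψ ^ 2 * (1 - ψ) ^ (a - ℓ) +
        (if ℓ = 1 then (PowerSeries.X : PowerSeries ℚ) else 0)) ∧
    (PowerSeries.X : PowerSeries ℚ) = ψ * (1 - ψ) ^ a := by
  set S : ℕ → PowerSeries ℚ := fun ℓ => ∑ p ∈ Finset.Icc 1 ℓ, φ p with hS
  have hSa : S a = ψ := hψ.symm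
  have hstep : ∀ ℓ ∈ Finset.Icc 2 a, S (ℓ - 1) = (1 - ψ) * S ℓ := by
    intro ℓ hℓ
    obtain ⟨h2, hA⟩ := Finset.mem_Icc.mp hℓ
    have hmem : ℓ ∈ Finset.Icc 1 a := Finset.mem_Icc.mpr ⟨by omega, hA⟩
    have h := hsys ℓ hmem
    rw [if_neg (by omega : ℓ ≠ 1), add_zero] at h
    have hsplit : S ℓ = S (ℓ - 1) + φ ℓ := by
      have he : ℓ - 1 + 1 = ℓ := by omega
      have := Finset.sum_Icc_succ_top (by omega : 1 ≤ ℓ - 1 + 1) φ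
      rw [he] at this
      simpa [hS] using this
    rw [show (∑ p ∈ Finset.Icc 1 ℓ, φ p) = S ℓ from rfl] at h
    linear_combination -hsplit - h
  have key : ∀ k, k ≤ a - 1 → S (a - k) = ψ * (1 - ψ) ^ k := by
    intro k
    induction k with
    | zero => intro _; simpa using hSa
    | succ n ih =>
      intro hk
      have hn : n ≤ a - 1 := by omega
      have h1 : a - n ∈ Finset.Icc 2 a := Finset.mem_Icc.mpr ⟨by omega, by omega⟩
      have h := hstep (a - n) h1
      rw [show a - n - 1 = a - (n + 1) from by omega, ih hn] at h
      rw [h]; ring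
  have hSval : ∀ ℓ ∈ Finset.Icc 1 a, S ℓ = ψ * (1 - ψ) ^ (a - ℓ) := by
    intro ℓ hℓ
    obtain ⟨h1, h2⟩ := Finset.mem_Icc.mp hℓ
    have := key (a - ℓ) (by omega)
    rwa [show a - (a - ℓ) = ℓ from by omega] at this
  constructor
  · intro ℓ hℓ
    rw [hsys ℓ hℓ, show (∑ p ∈ Finset.Icc 1 ℓ, φ p) = S ℓ from rfl, hSval ℓ hℓ]
    ring
  · have h1mem : (1 : ℕ) ∈ Finset.Icc 1 a := Finset.mem_Icc.mpr ⟨le_refl 1, ha⟩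
    have h := hsys 1 h1mem
    rw [if_pos rfl] at h
    have hφ1 : φ 1 = S 1 := by simp [hS]
    have hS1 : S 1 = ψ * (1 - ψ) ^ (a - 1) := hSval 1 h1mem
    rw [show (∑ p ∈ Finset.Icc 1 1, φ p) = S 1 from rfl, ← hφ1.symm] at h
    have hx : (PowerSeries.X : PowerSeries ℚ) = (1 - ψ) * S 1 := by
      linear_combination -h
    have hpow : (1 - ψ) ^ a = (1 - ψ) ^ (a - 1) * (1 - ψ) := by
      rw [← pow_succ, show a - 1 + 1 = a from by omega]
    rw [hx, hS1, hpow]; ring
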